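/- arXiv:1212.3736 — 3 statements merged into one kernel-verified Lean document; each statement's English description precedes it below -/
import Mathlib

section
/- Positive semidefinite bipartite relaxation is exact: let Q be a symmetric positive semidefinite n×n real matrix and c ∈ ℝ^n. Then the maximum over x, y ∈ {0,1}^n of (xᵀQy + c·x + c·y) equals the maximum over x ∈ {0,1}^n of (xᵀQx + 2c·x); in particular, the bipartite maximum is attained at some pair with x = y. -/
/-- The bipartite objective `xᵀQy + c·x + c·y`. -/
noncomputable def bipObj {n : ℕ} (Q : Matrix (Fin n) (Fin n) ℝ) (c : Fin n → ℝ)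
    (x y : Fin n → ℝ) : ℝ :=
  (∑ i, ∑ j, Q i j * x i * y j) + (∑ i, c i * x i) + (∑ j, c j * y j)

/-- Positive semidefinite bipartite relaxation is exact: for a symmetric positive
semidefinite `Q` and any `c`, the maximum over binary `x, y` of `xᵀQy + c·x + c·y`
equals the maximum over binary `x` of `xᵀQx + 2c·x`; in particular the bipartite
maximum is attained at a pair with `x = y`. -/
theorem stmt_9 (n : ℕ) (Q : Matrix (Fin n) (Fin n) ℝ) (c : Fin n → ℝ)
    (hsym : ∀ i j, Q i j = Q j i)
    (hpsd : ∀ z : Fin n → ℝ, 0 ≤ ∑ i, ∑ j, Q i j * z i * z j) :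
    (sSup {v : ℝ | ∃ x y : Fin n → ℝ,
        (∀ i, x i = 0 ∨ x i = 1) ∧ (∀ j, y j = 0 ∨ y j = 1) ∧ v = bipObj Q c x y} =
      sSup {v : ℝ | ∃ x : Fin n → ℝ, (∀ i, x i = 0 ∨ x i = 1) ∧
        v = (∑ i, ∑ j, Q i j * x i * x j) + 2 * ∑ i, c i * x i}) ∧
    (∃ x : Fin n → ℝ, (∀ i, x i = 0 ∨ x i = 1) ∧
      IsGreatest {v : ℝ | ∃ x' y' : Fin n → ℝ,
          (∀ i, x' i = 0 ∨ x' i = 1) ∧ (∀ j, y' j = 0 ∨ y' j = 1) ∧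
          v = bipObj Q c x' y'}
        (bipObj Q c x x)) := by
  classical
  set S1 : Set ℝ := {v : ℝ | ∃ x y : Fin n → ℝ,
      (∀ i, x i = 0 ∨ x i = 1) ∧ (∀ j, y j = 0 ∨ y j = 1) ∧ v = bipObj Q c x y} with hS1
  set S2 : Set ℝ := {v : ℝ | ∃ x : Fin n → ℝ, (∀ i, x i = 0 ∨ x i = 1) ∧
      v = (∑ i, ∑ j, Q i j * x i * x j) + 2 * ∑ i, c i * x i} with hS2
  have hdiag : ∀ x : Fin n → ℝ,
      (∑ i, ∑ j, Q i j * x i * x j) + 2 * ∑ i, c i * x i = bipObj Q c x x := by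
    intro x; simp only [bipObj]; ring
  have hcross : ∀ x y : Fin n → ℝ,
      (∑ i, ∑ j, Q i j * y i * x j) = ∑ i, ∑ j, Q i j * x i * y j := by
    intro x y
    rw [Finset.sum_comm]
    refine Finset.sum_congr rfl fun j _ => Finset.sum_congr rfl fun i _ => ?_
    rw [hsym]; ring
  have key : ∀ x y : Fin n → ℝ, 2 * (∑ i, ∑ j, Q i j * x i * y j)
      ≤ (∑ i, ∑ j, Q i j * x i * x j) + (∑ i, ∑ j, Q i j * y i * y j) := by
    intro x y
    have h := hpsd (x - y)
    have hterm : ∀ i j : Fin n, Q i j * (x - y) i * (x - y) j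
        = Q i j * x i * x j - Q i j * x i * y j - (Q i j * y i * x j - Q i j * y i * y j) := by
      intro i j; simp only [Pi.sub_apply]; ring
    have hexp : ∑ i, ∑ j, Q i j * (x - y) i * (x - y) j
        = (∑ i, ∑ j, Q i j * x i * x j) - (∑ i, ∑ j, Q i j * x i * y j)
          - ((∑ i, ∑ j, Q i j * y i * x j) - ∑ i, ∑ j, Q i j * y i * y j) := by
      simp only [hterm, Finset.sum_sub_distrib]
    rw [hexp, hcross x y] at h
    linarith
  -- the per-pair bound
  have hbound : ∀ x y : Fin n → ℝ,
      bipObj Q c x y ≤ max (bipObj Q c x x) (bipObj Q c y y) := by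
    intro x y
    have h := key x y
    have h1 : bipObj Q c x x ≤ max (bipObj Q c x x) (bipObj Q c y y) := le_max_left _ _
    have h2 : bipObj Q c y y ≤ max (bipObj Q c x x) (bipObj Q c y y) := le_max_right _ _
    simp only [bipObj] at *
    linarith
  -- S1 is finite
  have hsub : S1 ⊆ Set.range (fun p : (Fin n → Bool) × (Fin n → Bool) =>
      bipObj Q c (fun i => if p.1 i then 1 else 0) (fun j => if p.2 j then 1 else 0)) := by
    rintro v ⟨x, y, hx, hy, rfl⟩
    refine ⟨⟨fun i => if x i = 1 then true else false, fun j => if y j = 1 then true else false⟩, ?_⟩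
    simp only
    congr 1 <;> funext i <;> [rcases hx i with h | h; rcases hy i with h | h] <;> simp [h]
  have hfin : S1.Finite := Set.Finite.subset (Set.finite_range _) hsub
  have hne : S1.Nonempty := ⟨bipObj Q c (fun _ => 0) (fun _ => 0),
    fun _ => 0, fun _ => 0, fun _ => Or.inl rfl, fun _ => Or.inl rfl, rfl⟩
  obtain ⟨m, hmS, hmax⟩ := hfin.exists_maximalFor id S1 hne
  have hub : ∀ v ∈ S1, v ≤ m := by
    intro v hv
    by_contra hlt
    push_neg at hlt
    exact (hmax hv hlt.le).not_gt hlt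
  obtain ⟨x, y, hx, hy, hm⟩ := hmS
  have hxx : bipObj Q c x x ∈ S1 := ⟨x, x, hx, hx, rfl⟩
  have hyy : bipObj Q c y y ∈ S1 := ⟨y, y, hy, hy, rfl⟩
  have hmle : m ≤ max (bipObj Q c x x) (bipObj Q c y y) := hm ▸ hbound x y
  have : m = bipObj Q c x x ∨ m = bipObj Q c y y := by
    rcases le_total (bipObj Q c x x) (bipObj Q c y y) with h | h
    · right; have := hub _ hyy; rw [max_eq_right h] at hmle; linarith
    · left; have := hub _ hxx; rw [max_eq_left h] at hmle; linarith
  obtain ⟨z, hz, hmz⟩ : ∃ z : Fin n → ℝ, (∀ i, z i = 0 ∨ z i = 1) ∧ m = bipObj Q c z z := by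
    rcases this with h | h
    · exact ⟨x, hx, h⟩
    · exact ⟨y, hy, h⟩
  have hG1 : IsGreatest S1 m := ⟨⟨x, y, hx, hy, hm⟩, hub⟩
  have hG2 : IsGreatest S2 m := by
    constructor
    · exact ⟨z, hz, by rw [hmz, ← hdiag z]⟩
    · rintro v ⟨w, hw, rfl⟩
      rw [hdiag w]
      exact hub _ ⟨w, w, hw, hw, rfl⟩
  refine ⟨?_, z, hz, hmz ▸ hG1⟩
  rw [hG1.csSup_eq, hG2.csSup_eq]
end

section
/- Penalty reduction of QP01 to BQP01: let Q' be an n×n real matrix and c' ∈ ℝ^n, and let M > 2(Σ_{i,j}|q'_{ij}| + Σ_i|c'_i|). Then the maximum over x, y ∈ {0,1}^n of xᵀ(Q' + 2MI)y + ((1/2)c' − M·𝟙)·x + ((1/2)c' − M·𝟙)·y equals the maximum over x ∈ {0,1}^n of xᵀQ'x + c'·x, and every maximizing pair (x,y) of the former satisfies x = y. -/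
/-- The penalized bipartite objective
`xᵀ(Q' + 2MI)y + ((1/2)c' − M𝟙)·x + ((1/2)c' − M𝟙)·y`. -/
noncomputable def penObj {n : ℕ} (Q' : Matrix (Fin n) (Fin n) ℝ) (c' : Fin n → ℝ)
    (M : ℝ) (x y : Fin n → ℝ) : ℝ :=
  (∑ i, ∑ j, (Q' i j + 2 * M * (if i = j then 1 else 0)) * x i * y j)
    + (∑ i, ((1 / 2) * c' i - M) * x i) + (∑ i, ((1 / 2) * c' i - M) * y i)

lemma penObj_eq {n : ℕ} (Q' : Matrix (Fin n) (Fin n) ℝ) (c' : Fin n → ℝ) (M : ℝ)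
    (x y : Fin n → ℝ) (hx : ∀ i, x i = 0 ∨ x i = 1) (hy : ∀ i, y i = 0 ∨ y i = 1) :
    penObj Q' c' M x y =
      ((∑ i, ∑ j, Q' i j * x i * y j) + ∑ i, c' i * (x i + y i) / 2)
        - M * ∑ i, (x i - y i) ^ 2 := by
  have hx2 : ∀ i, x i ^ 2 = x i := fun i => by rcases hx i with h | h <;> rw [h] <;> ring
  have hy2 : ∀ i, y i ^ 2 = y i := fun i => by rcases hy i with h | h <;> rw [h] <;> ring
  unfold penObj
  have h1 : ∀ i, ∑ j, (Q' i j + 2 * M * (if i = j then 1 else 0)) * x i * y j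
      = (∑ j, Q' i j * x i * y j) + 2 * M * (x i * y i) := by
    intro i
    have : ∀ j, (Q' i j + 2 * M * (if i = j then 1 else 0)) * x i * y j
        = Q' i j * x i * y j + (if i = j then 2 * M * (x i * y j) else 0) := by
      intro j; by_cases h : i = j <;> simp [h] <;> ring
    simp only [this, Finset.sum_add_distrib, Finset.sum_ite_eq, Finset.mem_univ, if_true]
  simp only [h1, Finset.sum_add_distrib]
  rw [Finset.mul_sum]
  have key : (∑ i, c' i * (x i + y i) / 2) - ∑ i, M * (x i - y i) ^ 2
      = (∑ i, 2 * M * (x i * y i))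
        + ((∑ i, ((1/2) * c' i - M) * x i) + ∑ i, ((1/2) * c' i - M) * y i) := by
    rw [← Finset.sum_sub_distrib, ← Finset.sum_add_distrib, ← Finset.sum_add_distrib]
    apply Finset.sum_congr rfl
    intro i _
    rcases hx i with h | h <;> rcases hy i with h2 | h2 <;> rw [h, h2] <;> ring
  linarith [key]

lemma penObj_diag {n : ℕ} (Q' : Matrix (Fin n) (Fin n) ℝ) (c' : Fin n → ℝ) (M : ℝ)
    (x : Fin n → ℝ) (hx : ∀ i, x i = 0 ∨ x i = 1) :
    penObj Q' c' M x x = (∑ i, ∑ j, Q' i j * x i * x j) + ∑ i, c' i * x i := by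
  rw [penObj_eq Q' c' M x x hx hx]
  simp only [sub_self, ne_eq, OfNat.ofNat_ne_zero, not_false_eq_true, zero_pow,
    Finset.sum_const_zero, mul_zero, sub_zero]
  congr 1
  apply Finset.sum_congr rfl
  intro i _; ring

lemma bilin_bound {n : ℕ} (Q' : Matrix (Fin n) (Fin n) ℝ) (x y : Fin n → ℝ)
    (hx : ∀ i, x i = 0 ∨ x i = 1) (hy : ∀ i, y i = 0 ∨ y i = 1) :
    |∑ i, ∑ j, Q' i j * x i * y j| ≤ ∑ i, ∑ j, |Q' i j| := by
  calc |∑ i, ∑ j, Q' i j * x i * y j| ≤ ∑ i, |∑ j, Q' i j * x i * y j| :=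
        Finset.abs_sum_le_sum_abs _ _
    _ ≤ ∑ i, ∑ j, |Q' i j| := by
        apply Finset.sum_le_sum
        intro i _
        calc |∑ j, Q' i j * x i * y j| ≤ ∑ j, |Q' i j * x i * y j| :=
              Finset.abs_sum_le_sum_abs _ _
          _ ≤ ∑ j, |Q' i j| := by
              apply Finset.sum_le_sum
              intro j _
              rw [abs_mul, abs_mul]
              rcases hx i with h | h <;> rcases hy j with h2 | h2 <;>
                simp [h, h2, abs_nonneg]

lemma lin_bound {n : ℕ} (c' : Fin n → ℝ) (x y : Fin n → ℝ)
    (hx : ∀ i, x i = 0 ∨ x i = 1) (hy : ∀ i, y i = 0 ∨ y i = 1) :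
    |∑ i, c' i * (x i + y i) / 2| ≤ ∑ i, |c' i| := by
  calc |∑ i, c' i * (x i + y i) / 2| ≤ ∑ i, |c' i * (x i + y i) / 2| :=
        Finset.abs_sum_le_sum_abs _ _
    _ ≤ ∑ i, |c' i| := by
        apply Finset.sum_le_sum
        intro i _
        rw [abs_div, abs_mul]
        rcases hx i with h | h <;> rcases hy i with h2 | h2 <;>
          rw [h, h2] <;> norm_num


lemma penObj_strict {n : ℕ} (Q' : Matrix (Fin n) (Fin n) ℝ) (c' : Fin n → ℝ) (M : ℝ)
    (hM : 2 * ((∑ i, ∑ j, |Q' i j|) + ∑ i, |c' i|) < M)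
    (x y : Fin n → ℝ) (hx : ∀ i, x i = 0 ∨ x i = 1) (hy : ∀ i, y i = 0 ∨ y i = 1)
    (hne : x ≠ y) : penObj Q' c' M x y < penObj Q' c' M x x := by
  set BQ := ∑ i, ∑ j, |Q' i j| with hBQ
  set Bc := ∑ i, |c' i| with hBc
  have hs : (1 : ℝ) ≤ ∑ i, (x i - y i) ^ 2 := by
    obtain ⟨i, hi⟩ : ∃ i, x i ≠ y i := by
      by_contra h
      push_neg at h
      exact hne (funext h)
    have h1 : (x i - y i) ^ 2 = 1 := by
      rcases hx i with h | h <;> rcases hy i with h2 | h2 <;>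
        first
          | (exact absurd (h.trans h2.symm) hi)
          | (rw [h, h2]; norm_num)
    calc (1 : ℝ) = (x i - y i) ^ 2 := h1.symm
      _ ≤ ∑ i, (x i - y i) ^ 2 :=
          Finset.single_le_sum (fun j _ => sq_nonneg (x j - y j)) (Finset.mem_univ i)
  have b1 := abs_le.mp (bilin_bound Q' x y hx hy)
  have b2 := abs_le.mp (lin_bound c' x y hx hy)
  have b3 := abs_le.mp (bilin_bound Q' x x hx hx)
  have b4 := abs_le.mp (lin_bound c' x x hx hx)
  have hBQ0 : 0 ≤ BQ := Finset.sum_nonneg fun i _ =>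
    Finset.sum_nonneg fun j _ => abs_nonneg _
  have hBc0 : 0 ≤ Bc := Finset.sum_nonneg fun i _ => abs_nonneg _
  have hM0 : 0 < M := by linarith
  rw [penObj_eq Q' c' M x y hx hy, penObj_eq Q' c' M x x hx hx]
  have hxx : ∑ i, (x i - x i) ^ 2 = 0 := by simp
  rw [hxx]
  nlinarith [mul_le_mul_of_nonneg_left hs (le_of_lt hM0)]

/-- Penalty reduction of QP01 to BQP01: if `M > 2(Σ|q'_{ij}| + Σ|c'_i|)` then the
maximum over binary `x, y` of the penalized bipartite objective equals the maximum
over binary `x` of `xᵀQ'x + c'·x`, and every maximizing pair `(x,y)` of the former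
has `x = y`. -/
theorem stmt_11 (n : ℕ) (Q' : Matrix (Fin n) (Fin n) ℝ) (c' : Fin n → ℝ) (M : ℝ)
    (hM : 2 * ((∑ i, ∑ j, |Q' i j|) + ∑ i, |c' i|) < M) :
    (sSup {v : ℝ | ∃ x y : Fin n → ℝ,
        (∀ i, x i = 0 ∨ x i = 1) ∧ (∀ i, y i = 0 ∨ y i = 1) ∧ v = penObj Q' c' M x y} =
      sSup {v : ℝ | ∃ x : Fin n → ℝ, (∀ i, x i = 0 ∨ x i = 1) ∧
        v = (∑ i, ∑ j, Q' i j * x i * x j) + ∑ i, c' i * x i}) ∧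
    (∀ x y : Fin n → ℝ,
      (∀ i, x i = 0 ∨ x i = 1) → (∀ i, y i = 0 ∨ y i = 1) →
      (∀ x' y' : Fin n → ℝ,
        (∀ i, x' i = 0 ∨ x' i = 1) → (∀ i, y' i = 0 ∨ y' i = 1) →
        penObj Q' c' M x' y' ≤ penObj Q' c' M x y) →
      x = y) := by
  set S₁ := {v : ℝ | ∃ x y : Fin n → ℝ,
      (∀ i, x i = 0 ∨ x i = 1) ∧ (∀ i, y i = 0 ∨ y i = 1) ∧ v = penObj Q' c' M x y} with hS₁
  set S₂ := {v : ℝ | ∃ x : Fin n → ℝ, (∀ i, x i = 0 ∨ x i = 1) ∧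
      v = (∑ i, ∑ j, Q' i j * x i * x j) + ∑ i, c' i * x i} with hS₂
  have hzero : ∀ i, (0 : Fin n → ℝ) i = 0 ∨ (0 : Fin n → ℝ) i = 1 := fun i => Or.inl rfl
  have hM0 : 0 < M := by
    have hBQ0 : 0 ≤ ∑ i, ∑ j, |Q' i j| := Finset.sum_nonneg fun i _ =>
      Finset.sum_nonneg fun j _ => abs_nonneg _
    have hBc0 : 0 ≤ ∑ i, |c' i| := Finset.sum_nonneg fun i _ => abs_nonneg _
    linarith
  -- upper bound B for both sets
  set B := (∑ i, ∑ j, |Q' i j|) + ∑ i, |c' i| with hB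
  have hbd1 : ∀ v ∈ S₁, v ≤ B := by
    rintro v ⟨x, y, hx, hy, rfl⟩
    rw [penObj_eq Q' c' M x y hx hy]
    have b1 := abs_le.mp (bilin_bound Q' x y hx hy)
    have b2 := abs_le.mp (lin_bound c' x y hx hy)
    have hs : 0 ≤ ∑ i, (x i - y i) ^ 2 :=
      Finset.sum_nonneg fun i _ => sq_nonneg _
    nlinarith [mul_nonneg (le_of_lt hM0) hs]
  have hbd2 : ∀ v ∈ S₂, v ≤ B := by
    rintro v ⟨x, hx, rfl⟩
    rw [← penObj_diag Q' c' M x hx]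
    exact hbd1 _ ⟨x, x, hx, hx, rfl⟩
  have hne2 : S₂.Nonempty := ⟨_, 0, hzero, rfl⟩
  have hne1 : S₁.Nonempty := ⟨_, 0, 0, hzero, hzero, rfl⟩
  have hbdd1 : BddAbove S₁ := ⟨B, hbd1⟩
  have hbdd2 : BddAbove S₂ := ⟨B, hbd2⟩
  constructor
  · apply le_antisymm
    · apply csSup_le hne1
      rintro v ⟨x, y, hx, hy, rfl⟩
      have hle : penObj Q' c' M x y ≤ penObj Q' c' M x x := by
        by_cases h : x = y
        · rw [h]
        · exact le_of_lt (penObj_strict Q' c' M hM x y hx hy h)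
      calc penObj Q' c' M x y ≤ penObj Q' c' M x x := hle
        _ = (∑ i, ∑ j, Q' i j * x i * x j) + ∑ i, c' i * x i := penObj_diag Q' c' M x hx
        _ ≤ sSup S₂ := le_csSup hbdd2 ⟨x, hx, rfl⟩
    · apply csSup_le hne2
      rintro v ⟨x, hx, rfl⟩
      rw [← penObj_diag Q' c' M x hx]
      exact le_csSup hbdd1 ⟨x, x, hx, hx, rfl⟩
  · intro x y hx hy hmax
    by_contra hne
    have h1 := hmax x x hx hx
    have h2 := penObj_strict Q' c' M hM x y hx hy hne
    linarith
end

section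
/- Endpoint optimality for the rank-one case with d = 0: let a, c ∈ ℝ^m, b ∈ ℝ^n, a₀, b₀ ∈ ℝ, and consider g(x,y) = (a₀ + a·x)(b₀ + b·y) + c·x over x ∈ {0,1}^m, y ∈ {0,1}^n. Then there exists a maximizer (x*, y*) of g over {0,1}^m × {0,1}^n such that b·y* = max_{y∈{0,1}^n} b·y or b·y* = min_{y∈{0,1}^n} b·y. -/
/-- The rank-one objective with `d = 0`:
`g(x,y) = (a₀ + a·x)(b₀ + b·y) + c·x`. -/
noncomputable def rankOneObj {m n : ℕ} (a c : Fin m → ℝ) (b : Fin n → ℝ) (a₀ b₀ : ℝ)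
    (x : Fin m → ℝ) (y : Fin n → ℝ) : ℝ :=
  (a₀ + ∑ i, a i * x i) * (b₀ + ∑ j, b j * y j) + ∑ i, c i * x i

noncomputable def bR {k : ℕ} (p : Fin k → Bool) : Fin k → ℝ := fun i => if p i then 1 else 0

lemma bR_binary {k : ℕ} (p : Fin k → Bool) : ∀ i, bR p i = 0 ∨ bR p i = 1 := by
  intro i; unfold bR; split <;> simp

lemma exists_bool_rep {k : ℕ} (x : Fin k → ℝ) (hx : ∀ i, x i = 0 ∨ x i = 1) :
    ∃ p : Fin k → Bool, bR p = x := by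
  classical
  refine ⟨fun i => decide (x i = 1), ?_⟩
  funext i; unfold bR
  rcases hx i with h | h <;> simp [h]

lemma sum_le_yMax {n : ℕ} (b : Fin n → ℝ) (y : Fin n → ℝ) (hy : ∀ j, y j = 0 ∨ y j = 1) :
    ∑ j, b j * y j ≤ ∑ j, b j * (if 0 ≤ b j then (1:ℝ) else 0) := by
  apply Finset.sum_le_sum
  intro j _
  by_cases hb : 0 ≤ b j
  · rcases hy j with h | h <;> simp [h, hb] <;> try exact hb
  · have hb' := lt_of_not_ge hb
    rcases hy j with h | h <;> simp [h, hb] <;> linarith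

lemma yMin_le_sum {n : ℕ} (b : Fin n → ℝ) (y : Fin n → ℝ) (hy : ∀ j, y j = 0 ∨ y j = 1) :
    ∑ j, b j * (if 0 ≤ b j then (0:ℝ) else 1) ≤ ∑ j, b j * y j := by
  apply Finset.sum_le_sum
  intro j _
  by_cases hb : 0 ≤ b j
  · rcases hy j with h | h <;> simp [h, hb] <;> try exact hb
  · have hb' := lt_of_not_ge hb
    rcases hy j with h | h <;> simp [h, hb] <;> linarith

/-- Endpoint optimality for the rank-one case with `d = 0`: there is a maximizer
`(x*, y*)` of `g(x,y) = (a₀ + a·x)(b₀ + b·y) + c·x` over binary vectors such that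
`b·y*` is either the maximum or the minimum of `b·y` over binary `y`. -/
theorem stmt_16 (m n : ℕ) (a c : Fin m → ℝ) (b : Fin n → ℝ) (a₀ b₀ : ℝ) :
    ∃ xs : Fin m → ℝ, ∃ ys : Fin n → ℝ,
      (∀ i, xs i = 0 ∨ xs i = 1) ∧ (∀ j, ys j = 0 ∨ ys j = 1) ∧
      (∀ x : Fin m → ℝ, ∀ y : Fin n → ℝ,
        (∀ i, x i = 0 ∨ x i = 1) → (∀ j, y j = 0 ∨ y j = 1) →
        rankOneObj a c b a₀ b₀ x y ≤ rankOneObj a c b a₀ b₀ xs ys) ∧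
      ((∀ y : Fin n → ℝ, (∀ j, y j = 0 ∨ y j = 1) →
          (∑ j, b j * y j) ≤ ∑ j, b j * ys j) ∨
       (∀ y : Fin n → ℝ, (∀ j, y j = 0 ∨ y j = 1) →
          (∑ j, b j * ys j) ≤ ∑ j, b j * y j)) := by
  classical
  obtain ⟨⟨p, q⟩, hpq⟩ := Finite.exists_max
    (fun pq : (Fin m → Bool) × (Fin n → Bool) =>
      rankOneObj a c b a₀ b₀ (bR pq.1) (bR pq.2))
  set x0 := bR p with hx0
  have hmax : ∀ x y, (∀ i, x i = 0 ∨ x i = 1) → (∀ j, y j = 0 ∨ y j = 1) →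
      rankOneObj a c b a₀ b₀ x y ≤ rankOneObj a c b a₀ b₀ x0 (bR q) := by
    intro x y hx hy
    obtain ⟨px, hpx⟩ := exists_bool_rep x hx
    obtain ⟨py, hpy⟩ := exists_bool_rep y hy
    have := hpq (px, py)
    simp only at this
    rwa [hpx, hpy] at this
  set t := a₀ + ∑ i, a i * x0 i with ht
  by_cases htn : 0 ≤ t
  · refine ⟨x0, fun j => if 0 ≤ b j then (1:ℝ) else 0, bR_binary p, ?_, ?_, Or.inl ?_⟩
    · intro j; by_cases hb : 0 ≤ b j <;> simp [hb]
    · intro x y hx hy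
      refine (hmax x y hx hy).trans ?_
      unfold rankOneObj
      rw [← ht]
      have h1 : ∑ j, b j * bR q j ≤ ∑ j, b j * (if 0 ≤ b j then (1:ℝ) else 0) :=
        sum_le_yMax b (bR q) (bR_binary q)
      nlinarith
    · intro y hy; exact sum_le_yMax b y hy
  · refine ⟨x0, fun j => if 0 ≤ b j then (0:ℝ) else 1, bR_binary p, ?_, ?_, Or.inr ?_⟩
    · intro j; by_cases hb : 0 ≤ b j <;> simp [hb]
    · intro x y hx hy
      refine (hmax x y hx hy).trans ?_
      unfold rankOneObj
      rw [← ht]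
      have h1 : ∑ j, b j * (if 0 ≤ b j then (0:ℝ) else 1) ≤ ∑ j, b j * bR q j :=
        yMin_le_sum b (bR q) (bR_binary q)
      push_neg at htn
      nlinarith
    · intro y hy; exact yMin_le_sum b y hy
end
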